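/- Let E ∈ ℝ with E ≠ 0, and let ρ : ℝ → ℂ be continuous and integrable (ρ ∈ L¹(ℝ;ℂ)). Define Rρ(t) := (1/(2iE)) ∫_ℝ e^{iE|t−t'|} ρ(t') dt'. Then Rρ is continuously differentiable on ℝ, with (Rρ)'(t) = (1/2)∫_ℝ sgn(t−t') e^{iE|t−t'|} ρ(t') dt', and Rρ is outgoing: lim_{t→+∞} ((Rρ)'(t) − iE·Rρ(t)) = 0 and lim_{t→−∞} ((Rρ)'(t) + iE·Rρ(t)) = 0. -/

import Mathlib

open MeasureTheory Topology Filter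

noncomputable section

/-- The outgoing resolvent `Rρ(t) = (1/(2iE)) ∫ e^{iE|t−t'|}ρ(t')dt'`. -/
def Rsc (E : ℝ) (ρ : ℝ → ℂ) (t : ℝ) : ℂ :=
  (2 * Complex.I * (E : ℂ))⁻¹
    * ∫ t' : ℝ, Complex.exp (Complex.I * (E : ℂ) * (|t - t'| : ℝ)) * ρ t'

/-- The derivative of the outgoing resolvent,
`(Rρ)'(t) = (1/2) ∫ sgn(t−t') e^{iE|t−t'|}ρ(t')dt'`. -/
def RscD (E : ℝ) (ρ : ℝ → ℂ) (t : ℝ) : ℂ :=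
  (1 / 2 : ℂ)
    * ∫ t' : ℝ, (Real.sign (t - t') : ℝ)
        * Complex.exp (Complex.I * (E : ℂ) * (|t - t'| : ℝ)) * ρ t'

namespace RoutAux

open Set

lemma norm_exp_I_mul_mul (a b : ℝ) : ‖Complex.exp (Complex.I * a * b)‖ = 1 := by
  rw [Complex.norm_exp]
  simp [Complex.mul_re]

lemma norm_exp_neg (E x : ℝ) : ‖Complex.exp (-(Complex.I * E) * x)‖ = 1 := by
  rw [show -(Complex.I * (E:ℂ)) * (x:ℂ) = Complex.I * ((-E : ℝ) : ℂ) * x by push_cast; ring]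
  exact norm_exp_I_mul_mul _ _

lemma measurable_realSign : Measurable Real.sign := by
  unfold Real.sign
  exact Measurable.ite (p := fun r : ℝ => r < 0) measurableSet_Iio measurable_const
    (Measurable.ite (p := fun r : ℝ => 0 < r) measurableSet_Ioi measurable_const measurable_const)

lemma integral_split {φ : ℝ → ℂ} (h : Integrable φ) (t : ℝ) :
    ∫ s, φ s = (∫ s in Iic t, φ s) + (∫ s in Ioi t, φ s) := by
  rw [← setIntegral_union (Iic_disjoint_Ioi le_rfl) measurableSet_Ioi
    h.integrableOn h.integrableOn, Iic_union_Ioi, setIntegral_univ]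

lemma expd (c : ℂ) (t : ℝ) :
    HasDerivAt (fun s : ℝ => Complex.exp (c * s)) (c * Complex.exp (c * t)) t := by
  have h1 : HasDerivAt (fun z : ℂ => Complex.exp (c * z)) (c * Complex.exp (c * t)) (t : ℂ) := by
    exact ((Complex.hasDerivAt_exp (c * t)).comp (t : ℂ)
      ((hasDerivAt_id (t : ℂ)).const_mul c)).congr_deriv (by ring)
  exact h1.comp_ofReal


lemma Iic_hasDeriv {φ : ℝ → ℂ} (hc : Continuous φ) (hi : Integrable φ) (t : ℝ) :
    HasDerivAt (fun u => ∫ s in Iic u, φ s) (φ t) t := by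
  have key : (fun u => ∫ s in Iic u, φ s)
      = fun u => (∫ s in Iic (0:ℝ), φ s) + ∫ s in (0:ℝ)..u, φ s := by
    funext u
    rw [← intervalIntegral.integral_Iic_sub_Iic hi.integrableOn hi.integrableOn]
    ring
  rw [key]
  exact (intervalIntegral.integral_hasDerivAt_right hi.intervalIntegrable
    (hc.stronglyMeasurableAtFilter _ _) hc.continuousAt).const_add _

variable (E : ℝ) (ρ : ℝ → ℂ)

/-- f -/
noncomputable def fa (s : ℝ) : ℂ := Complex.exp (-(Complex.I * E) * s) * ρ s
/-- g -/
noncomputable def ga (s : ℝ) : ℂ := Complex.exp ((Complex.I * E) * s) * ρ s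
noncomputable def Fa (t : ℝ) : ℂ := ∫ s in Iic t, fa E ρ s
noncomputable def Ga (t : ℝ) : ℂ := ∫ s in Ioi t, ga E ρ s

variable {E ρ}
variable (hρc : Continuous ρ) (hρint : Integrable ρ)

section
include hρc

lemma fa_cont : Continuous (fa E ρ) :=
  (Complex.continuous_exp.comp (continuous_const.mul Complex.continuous_ofReal)).mul hρc

lemma ga_cont : Continuous (ga E ρ) :=
  (Complex.continuous_exp.comp (continuous_const.mul Complex.continuous_ofReal)).mul hρc

end

section
include hρint

lemma fa_int : Integrable (fa E ρ) :=
  hρint.bdd_mul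
    (Complex.continuous_exp.comp (continuous_const.mul Complex.continuous_ofReal)).aestronglyMeasurable
    (ae_of_all _ fun x => le_of_eq (norm_exp_neg E x))

lemma ga_int : Integrable (ga E ρ) :=
  hρint.bdd_mul
    (Complex.continuous_exp.comp (continuous_const.mul Complex.continuous_ofReal)).aestronglyMeasurable
    (ae_of_all _ fun x => le_of_eq (norm_exp_I_mul_mul E x))

lemma ker_int (t : ℝ) :
    Integrable (fun s => Complex.exp (Complex.I * E * (|t - s| : ℝ)) * ρ s) :=
  hρint.bdd_mul
    (Complex.continuous_exp.comp (continuous_const.mul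
      (Complex.continuous_ofReal.comp (continuous_const.sub continuous_id).abs))).aestronglyMeasurable
    (ae_of_all _ fun x => le_of_eq (norm_exp_I_mul_mul E _))

lemma w_int (t : ℝ) :
    Integrable (fun s => ((Real.sign (t - s) : ℝ) : ℂ)
      * Complex.exp (Complex.I * E * (|t - s| : ℝ)) * ρ s) := by
  refine Integrable.mono' hρint.norm ?_ ?_
  · refine AEStronglyMeasurable.mul ?_ hρint.aestronglyMeasurable
    refine AEStronglyMeasurable.mul ?_ ?_
    · exact ((Complex.measurable_ofReal.comp
        (measurable_realSign.comp (measurable_const.sub measurable_id))).aestronglyMeasurable)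
    · exact (Complex.continuous_exp.comp (continuous_const.mul
        (Complex.continuous_ofReal.comp (continuous_const.sub continuous_id).abs))).aestronglyMeasurable
  · refine ae_of_all _ fun s => ?_
    rw [norm_mul, norm_mul, norm_exp_I_mul_mul E _]
    have h1 : ‖((Real.sign (t - s) : ℝ) : ℂ)‖ ≤ 1 := by
      rcases Real.sign_apply_eq (t - s) with h | h | h <;> simp [h]
    calc ‖((Real.sign (t - s) : ℝ) : ℂ)‖ * 1 * ‖ρ s‖ ≤ 1 * 1 * ‖ρ s‖ := by
          gcongr
      _ = ‖ρ s‖ := by ring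

lemma hIic (t : ℝ) :
    (∫ s in Iic t, Complex.exp (Complex.I * E * (|t - s| : ℝ)) * ρ s)
      = Complex.exp (Complex.I * E * t) * Fa E ρ t := by
  rw [Fa, ← integral_const_mul]
  refine setIntegral_congr_fun measurableSet_Iic fun s hs => ?_
  have h1 : |t - s| = t - s := abs_of_nonneg (by simp only [mem_Iic] at hs; linarith)
  rw [h1, fa, show Complex.I * E * ((t - s : ℝ) : ℂ)
    = Complex.I * E * t + (-(Complex.I * E) * s) by push_cast; ring, Complex.exp_add]
  ring

lemma hIoi (t : ℝ) :
    (∫ s in Ioi t, Complex.exp (Complex.I * E * (|t - s| : ℝ)) * ρ s)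
      = Complex.exp (-(Complex.I * E) * t) * Ga E ρ t := by
  rw [Ga, ← integral_const_mul]
  refine setIntegral_congr_fun measurableSet_Ioi fun s hs => ?_
  have h1 : |t - s| = s - t := by
    rw [abs_sub_comm]; exact abs_of_nonneg (by simp only [mem_Ioi] at hs; linarith)
  rw [h1, ga, show Complex.I * E * ((s - t : ℝ) : ℂ)
    = -(Complex.I * E) * t + (Complex.I * E * s) by push_cast; ring, Complex.exp_add]
  ring

lemma Rsc_eq (t : ℝ) :
    Rsc E ρ t = (2 * Complex.I * E)⁻¹
      * (Complex.exp (Complex.I * E * t) * Fa E ρ t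
        + Complex.exp (-(Complex.I * E) * t) * Ga E ρ t) := by
  rw [Rsc, integral_split (ker_int hρint t) t, hIic hρint, hIoi hρint]

lemma RscD_eq (t : ℝ) :
    RscD E ρ t = (1 / 2 : ℂ)
      * (Complex.exp (Complex.I * E * t) * Fa E ρ t
        - Complex.exp (-(Complex.I * E) * t) * Ga E ρ t) := by
  rw [RscD, integral_split (w_int hρint t) t]
  have hane : ∀ᵐ s : ℝ, s ≠ t := by
    rw [ae_iff]
    simp only [not_ne_iff, Set.setOf_eq_eq_singleton]
    exact measure_singleton t
  have e1 : (∫ s in Iic t, ((Real.sign (t - s) : ℝ) : ℂ)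
      * Complex.exp (Complex.I * E * (|t - s| : ℝ)) * ρ s)
      = ∫ s in Iic t, Complex.exp (Complex.I * E * (|t - s| : ℝ)) * ρ s := by
    refine setIntegral_congr_ae measurableSet_Iic ?_
    filter_upwards [hane] with s hs hmem
    have hlt : s < t := lt_of_le_of_ne (mem_Iic.mp hmem) hs
    rw [Real.sign_of_pos (by linarith)]
    norm_num
  have e2 : (∫ s in Ioi t, ((Real.sign (t - s) : ℝ) : ℂ)
      * Complex.exp (Complex.I * E * (|t - s| : ℝ)) * ρ s)
      = -∫ s in Ioi t, Complex.exp (Complex.I * E * (|t - s| : ℝ)) * ρ s := by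
    rw [← integral_neg]
    refine setIntegral_congr_fun measurableSet_Ioi fun s hs => ?_
    have hlt : t < s := mem_Ioi.mp hs
    rw [Real.sign_of_neg (by linarith)]
    push_cast
    ring
  rw [e1, e2, hIic hρint, hIoi hρint]
  ring

end


section
include hρc hρint

lemma Fa_hasDeriv (t : ℝ) : HasDerivAt (Fa E ρ) (fa E ρ t) t := by
  have := Iic_hasDeriv (fa_cont (E:=E) hρc) (fa_int (E:=E) hρint) t
  exact this

lemma Ga_hasDeriv (t : ℝ) : HasDerivAt (Ga E ρ) (-(ga E ρ t)) t := by
  have key : Ga E ρ = fun u => (∫ s, ga E ρ s) - ∫ s in Iic u, ga E ρ s := by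
    funext u
    rw [Ga, integral_split (ga_int hρint) u]
    ring
  rw [key]
  exact (Iic_hasDeriv (ga_cont (E:=E) hρc) (ga_int (E:=E) hρint) t).const_sub _

end

section
include hρint

lemma Ga_top : Tendsto (Ga E ρ) atTop (𝓝 0) := by
  have key : Ga E ρ = fun u => (∫ s, ga E ρ s) - ∫ s in Iic u, ga E ρ s := by
    funext u
    rw [Ga, integral_split (ga_int hρint) u]
    ring
  rw [key]
  have h1 : Tendsto (fun u : ℝ => ∫ s in Iic u, ga E ρ s) atTop (𝓝 (∫ s, ga E ρ s)) :=
    (aecover_Iic tendsto_id).integral_tendsto_of_countably_generated (ga_int hρint)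
  simpa using h1.const_sub (∫ s, ga E ρ s)

lemma Fa_bot : Tendsto (Fa E ρ) atBot (𝓝 0) := by
  have key : Fa E ρ = fun u => (∫ s, fa E ρ s) - ∫ s in Ioi u, fa E ρ s := by
    funext u
    rw [Fa, integral_split (fa_int hρint) u]
    ring
  rw [key]
  have h1 : Tendsto (fun u : ℝ => ∫ s in Ioi u, fa E ρ s) atBot (𝓝 (∫ s, fa E ρ s)) :=
    (aecover_Ioi tendsto_id).integral_tendsto_of_countably_generated (fa_int hρint)
  simpa using h1.const_sub (∫ s, fa E ρ s)

end


end RoutAux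

open RoutAux

/-- **Lemma (`Rρ` is `C¹` and outgoing).** For real `E ≠ 0` and `ρ ∈ L¹`
continuous, `Rρ` is continuously differentiable with derivative
`(Rρ)'(t) = (1/2)∫ sgn(t−t')e^{iE|t−t'|}ρ(t')dt'`, and it satisfies the
outgoing radiation conditions `(Rρ)' − iE Rρ → 0` at `+∞` and
`(Rρ)' + iE Rρ → 0` at `−∞`. -/
theorem R_outgoing
    (E : ℝ) (hE : E ≠ 0) (ρ : ℝ → ℂ)
    (hρc : Continuous ρ) (hρint : Integrable ρ) :
    (∀ t : ℝ, HasDerivAt (Rsc E ρ) (RscD E ρ t) t) ∧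
    Continuous (RscD E ρ) ∧
    Tendsto (fun t : ℝ => RscD E ρ t - Complex.I * (E : ℂ) * Rsc E ρ t)
      atTop (𝓝 0) ∧
    Tendsto (fun t : ℝ => RscD E ρ t + Complex.I * (E : ℂ) * Rsc E ρ t)
      atBot (𝓝 0) := by
  have hne : (2 * Complex.I * (E : ℂ)) ≠ 0 :=
    mul_ne_zero (mul_ne_zero two_ne_zero Complex.I_ne_zero) (Complex.ofReal_ne_zero.mpr hE)
  have hc2 : ((2 * Complex.I * (E : ℂ))⁻¹ * (Complex.I * E)) = 1 / 2 := by
    rw [inv_mul_eq_div, div_eq_iff hne]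
    ring
  have hexpc : Continuous fun u : ℝ => Complex.exp (Complex.I * E * u) :=
    Complex.continuous_exp.comp (continuous_const.mul Complex.continuous_ofReal)
  have hexpc' : Continuous fun u : ℝ => Complex.exp (-(Complex.I * E) * u) :=
    Complex.continuous_exp.comp (continuous_const.mul Complex.continuous_ofReal)
  refine ⟨?_, ?_, ?_, ?_⟩
  · intro t
    have hA := (expd (Complex.I * E) t).mul (Fa_hasDeriv (E := E) hρc hρint t)
    have hB := (expd (-(Complex.I * E)) t).mul (Ga_hasDeriv (E := E) hρc hρint t)
    have h := (hA.add hB).const_mul ((2 * Complex.I * (E : ℂ))⁻¹)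
    have hfun : Rsc E ρ = fun u : ℝ =>
        (2 * Complex.I * (E : ℂ))⁻¹ * (Complex.exp (Complex.I * E * u) * Fa E ρ u
          + Complex.exp (-(Complex.I * E) * u) * Ga E ρ u) := funext (Rsc_eq hρint)
    rw [hfun, RscD_eq hρint t]
    refine h.congr_deriv (Eq.symm ?_)
    simp only [fa, ga]
    linear_combination (Complex.exp (-(Complex.I * E) * (t : ℝ)) * Ga E ρ t
      - Complex.exp (Complex.I * E * (t : ℝ)) * Fa E ρ t) * hc2
  · have hfun : RscD E ρ = fun u : ℝ =>
        (1 / 2 : ℂ) * (Complex.exp (Complex.I * E * u) * Fa E ρ u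
          - Complex.exp (-(Complex.I * E) * u) * Ga E ρ u) := funext (RscD_eq hρint)
    rw [hfun]
    have hFc : Continuous (Fa E ρ) :=
      continuous_iff_continuousAt.mpr fun t => (Fa_hasDeriv (E := E) hρc hρint t).continuousAt
    have hGc : Continuous (Ga E ρ) :=
      continuous_iff_continuousAt.mpr fun t => (Ga_hasDeriv (E := E) hρc hρint t).continuousAt
    exact continuous_const.mul ((hexpc.mul hFc).sub (hexpc'.mul hGc))
  · have hkey : ∀ t : ℝ, RscD E ρ t - Complex.I * E * Rsc E ρ t
        = -(Complex.exp (-(Complex.I * E) * t) * Ga E ρ t) := by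
      intro t
      rw [RscD_eq hρint t, Rsc_eq hρint t]
      linear_combination (-(Complex.exp (Complex.I * E * (t : ℝ)) * Fa E ρ t
        + Complex.exp (-(Complex.I * E) * (t : ℝ)) * Ga E ρ t)) * hc2
    simp only [hkey]
    rw [tendsto_zero_iff_norm_tendsto_zero]
    have heq : (fun t : ℝ => ‖-(Complex.exp (-(Complex.I * E) * t) * Ga E ρ t)‖)
        = fun t => ‖Ga E ρ t‖ := by
      funext t
      rw [norm_neg, norm_mul, norm_exp_neg, one_mul]
    rw [heq]
    simpa using (Ga_top (E := E) hρint).norm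
  · have hkey : ∀ t : ℝ, RscD E ρ t + Complex.I * E * Rsc E ρ t
        = Complex.exp (Complex.I * E * t) * Fa E ρ t := by
      intro t
      rw [RscD_eq hρint t, Rsc_eq hρint t]
      linear_combination ((Complex.exp (Complex.I * E * (t : ℝ)) * Fa E ρ t
        + Complex.exp (-(Complex.I * E) * (t : ℝ)) * Ga E ρ t)) * hc2
    simp only [hkey]
    rw [tendsto_zero_iff_norm_tendsto_zero]
    have heq : (fun t : ℝ => ‖Complex.exp (Complex.I * E * t) * Fa E ρ t‖)
        = fun t => ‖Fa E ρ t‖ := by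
      funext t
      rw [norm_mul, norm_exp_I_mul_mul, one_mul]
    rw [heq]
    simpa using (Fa_bot (E := E) hρint).norm


end
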